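/- Assume condition (A) holds for Π_h and that condition (B) holds for every index i = 2, …, n with constants κ_2, …, κ_n > 0 (no assumption is made for the subspace V_{h,1}). Let α, A > 0 be such that α‖u‖_𝕍² ≤ |||u|||_𝕍² ≤ A‖u‖_𝕍² for all u ∈ V_h. Then for all f ∈ X_h one has β‖f‖_𝕏² ≤ |||f|||_𝕏² ≤ B‖f‖_𝕏², where β = α / (2 · max{‖Π_h‖, κ_2, …, κ_n}² · ‖Π_h‖²) and B = ‖Π_h‖² A. -/

import Mathlib

set_option maxHeartbeats 1000000

open Submodule Filter

lemma exists_decomp' {V : Type*} [AddCommGroup V] [Module ℝ V] {n : ℕ}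
    (Vsub : Fin n → Submodule ℝ V) {u : V} (hu : u ∈ ⨆ i, Vsub i) :
    ∃ w : Fin n → V, (∀ i, w i ∈ Vsub i) ∧ (∑ i, w i) = u := by
  rw [Submodule.mem_iSup_iff_exists_finsupp] at hu
  obtain ⟨w, hw, hsum⟩ := hu
  refine ⟨fun i => w i, hw, ?_⟩
  rwa [Finsupp.sum_fintype] at hsum
  intro i; rfl

lemma sum_ite_erase {M : Type*} [AddCommMonoid M] {n : ℕ} [NeZero n] (v : Fin n → M) :
    ∑ i, (if i = 0 then 0 else v i) = ∑ i ∈ Finset.univ.erase 0, v i := by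
  classical
  rw [← Finset.sum_subset (Finset.erase_subset 0 Finset.univ) (fun x _ hx => by
    simp only [Finset.mem_erase, Finset.mem_univ, and_true, not_not] at hx
    simp [hx])]
  exact Finset.sum_congr rfl (fun i hi => by simp [(Finset.mem_erase.mp hi).1])

/-- The squared splitting norm `|||u|||_𝕍²` in the Hilbert space `𝕍`. -/
noncomputable def splitNormSqV {V : Type*} [NormedAddCommGroup V] [InnerProductSpace ℝ V]
    {n : ℕ} (Vsub : Fin n → Submodule ℝ V) (u : V) : ℝ :=
  sInf {s : ℝ | ∃ w : Fin n → V, (∀ i, w i ∈ Vsub i) ∧ (∑ i, w i) = u ∧ s = ∑ i, ‖w i‖ ^ 2}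

/-- The squared splitting norm `|||f|||_𝕏²` in the quotient space `𝕏 = 𝕍/𝕍₀`,
with respect to the subspaces `X_{h,i} = T(V_{h,i})`. -/
noncomputable def splitNormSqX {V : Type*} [NormedAddCommGroup V] [InnerProductSpace ℝ V]
    (V₀ : Submodule ℝ V) [IsClosed (V₀ : Set V)]
    {n : ℕ} (Vsub : Fin n → Submodule ℝ V) (f : V ⧸ V₀) : ℝ :=
  sInf {s : ℝ | ∃ g : Fin n → V ⧸ V₀,
    (∀ i, g i ∈ (Vsub i).map V₀.mkQ) ∧ (∑ i, g i) = f ∧ s = ∑ i, ‖g i‖ ^ 2}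

/-- Stability of the induced quotient splitting, with condition (B) weakened:
it is not required for the first subspace `V_{h,1}` (index `0` of `Fin n`). -/
theorem quotient_splitting_stability_weakened
    {V : Type*} [NormedAddCommGroup V] [InnerProductSpace ℝ V] [CompleteSpace V]
    (V₀ : Submodule ℝ V) [IsClosed (V₀ : Set V)]
    {n : ℕ} [NeZero n] (Vsub : Fin n → Submodule ℝ V) [∀ i, FiniteDimensional ℝ (Vsub i)]
    (Vh : Submodule ℝ V) (hVh : Vh = ⨆ i, Vsub i)
    -- Condition (A): a bounded projection `Π_h` onto `V_h` preserving `𝕍₀`.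
    (Pih : V →L[ℝ] V)
    (hPirange : ∀ u : V, Pih u ∈ Vh)
    (hPiproj : ∀ u ∈ Vh, Pih u = u)
    (hPipres : ∀ u ∈ V₀, Pih u ∈ V₀)
    -- Condition (B) for every index `i ≠ 0`, with constants `κ i > 0`.
    (κ : Fin n → ℝ) (hκ : ∀ i, i ≠ 0 → 0 < κ i)
    (hB : ∀ i, i ≠ 0 → ∀ u ∈ Vsub i,
      sInf {r : ℝ | ∃ u₀ ∈ V₀ ⊓ Vsub i, r = ‖u - u₀‖} ≤
        κ i * sInf {r : ℝ | ∃ u₀ ∈ V₀ ⊓ Vh, r = ‖u - u₀‖})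
    -- Stability of the splitting in `𝕍`.
    (α A : ℝ) (hα : 0 < α) (hA : 0 < A)
    (hstable : ∀ u ∈ Vh,
      α * ‖u‖ ^ 2 ≤ splitNormSqV Vsub u ∧ splitNormSqV Vsub u ≤ A * ‖u‖ ^ 2) :
    ∀ f ∈ Vh.map V₀.mkQ,
      (α / (2 * (⨆ i, if i = 0 then ‖Pih‖ else κ i) ^ 2 * ‖Pih‖ ^ 2)) * ‖f‖ ^ 2 ≤
          splitNormSqX V₀ Vsub f ∧
      splitNormSqX V₀ Vsub f ≤ (‖Pih‖ ^ 2 * A) * ‖f‖ ^ 2 := by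
  classical
  intro f hf
  set c : ℝ := ⨆ i, if i = 0 then ‖Pih‖ else κ i with hc
  -- basic sets
  set SX : Set ℝ := {s : ℝ | ∃ g : Fin n → V ⧸ V₀,
    (∀ i, g i ∈ (Vsub i).map V₀.mkQ) ∧ (∑ i, g i) = f ∧ s = ∑ i, ‖g i‖ ^ 2} with hSX
  have hbddX : BddBelow SX := by
    refine ⟨0, ?_⟩
    rintro s ⟨g, -, -, rfl⟩
    positivity
  have hbddV : ∀ u : V, BddBelow {s : ℝ | ∃ w : Fin n → V,
      (∀ i, w i ∈ Vsub i) ∧ (∑ i, w i) = u ∧ s = ∑ i, ‖w i‖ ^ 2} := by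
    intro u
    refine ⟨0, ?_⟩
    rintro s ⟨w, -, -, rfl⟩
    positivity
  -- nonemptiness of SX
  have hSXne : SX.Nonempty := by
    have hf' : f ∈ ⨆ i, (Vsub i).map V₀.mkQ := by
      rw [← Submodule.map_iSup, ← hVh]; exact hf
    obtain ⟨g, hg, hgsum⟩ := exists_decomp' _ hf'
    exact ⟨∑ i, ‖g i‖ ^ 2, g, hg, hgsum, rfl⟩
  -- key comparison: for any representative `u ∈ Vh` of `f`,
  -- `splitNormSqX f ≤ splitNormSqV u`
  have hXleV : ∀ u : V, V₀.mkQ u = f → u ∈ Vh →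
      splitNormSqX V₀ Vsub f ≤ splitNormSqV Vsub u := by
    intro u hu huVh
    have hVne : {s : ℝ | ∃ w : Fin n → V,
        (∀ i, w i ∈ Vsub i) ∧ (∑ i, w i) = u ∧ s = ∑ i, ‖w i‖ ^ 2}.Nonempty := by
      obtain ⟨w, hw, hwsum⟩ := exists_decomp' Vsub (hVh ▸ huVh)
      exact ⟨∑ i, ‖w i‖ ^ 2, w, hw, hwsum, rfl⟩
    refine le_csInf hVne ?_
    rintro s ⟨w, hw, hwsum, rfl⟩
    calc splitNormSqX V₀ Vsub f ≤ ∑ i, ‖V₀.mkQ (w i)‖ ^ 2 := by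
          refine csInf_le hbddX ⟨fun i => V₀.mkQ (w i), fun i => mem_map_of_mem (hw i),
            ?_, rfl⟩
          rw [← map_sum, hwsum, hu]
      _ ≤ ∑ i, ‖w i‖ ^ 2 := by
          refine Finset.sum_le_sum fun i _ => ?_
          have h1 : ‖V₀.mkQ (w i)‖ ≤ ‖w i‖ := by
            rw [Submodule.mkQ_apply]; exact Submodule.Quotient.norm_mk_le _ _
          have h2 : (0:ℝ) ≤ ‖V₀.mkQ (w i)‖ := norm_nonneg _
          nlinarith
  -- representative of f in Vh
  obtain ⟨u₀f, hu₀f, hu₀fq⟩ := hf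
  -- mkQ of any representative shifted by Pih stays a representative
  have hPirep : ∀ m : V, V₀.mkQ m = f → V₀.mkQ (Pih m) = f := by
    intro m hm
    have h0 : m - u₀f ∈ V₀ := by
      rw [← Submodule.Quotient.eq]
      show V₀.mkQ m = V₀.mkQ u₀f
      rw [hm, hu₀fq]
    have h1 : Pih m - u₀f ∈ V₀ := by
      have := hPipres _ h0
      rwa [map_sub, hPiproj _ hu₀f] at this
    rw [← hu₀fq, ← sub_eq_zero, ← map_sub, Submodule.mkQ_apply,
      Submodule.Quotient.mk_eq_zero]
    exact h1
  -- Upper bound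
  have hupper : splitNormSqX V₀ Vsub f ≤ (‖Pih‖ ^ 2 * A) * ‖f‖ ^ 2 := by
    have key : ∀ ε > (0:ℝ), splitNormSqX V₀ Vsub f ≤ A * (‖Pih‖ * (‖f‖ + ε)) ^ 2 := by
      intro ε hε
      obtain ⟨m, hm, hmn⟩ := Submodule.Quotient.norm_mk_lt f hε
      have hm' : V₀.mkQ m = f := hm
      have hrep := hPirep m hm'
      calc splitNormSqX V₀ Vsub f ≤ splitNormSqV Vsub (Pih m) :=
            hXleV _ hrep (hPirange m)
        _ ≤ A * ‖Pih m‖ ^ 2 := (hstable _ (hPirange m)).2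
        _ ≤ A * (‖Pih‖ * (‖f‖ + ε)) ^ 2 := by
            have h1 : ‖Pih m‖ ≤ ‖Pih‖ * (‖f‖ + ε) := by
              refine (Pih.le_opNorm m).trans ?_
              have := norm_nonneg Pih
              nlinarith
            exact mul_le_mul_of_nonneg_left
              (pow_le_pow_left₀ (norm_nonneg _) h1 2) hA.le
    have ht : Filter.Tendsto (fun ε : ℝ => A * (‖Pih‖ * (‖f‖ + ε)) ^ 2)
        (nhdsWithin 0 (Set.Ioi 0)) (nhds ((‖Pih‖ ^ 2 * A) * ‖f‖ ^ 2)) := by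
      have hcont : Filter.Tendsto (fun ε : ℝ => A * (‖Pih‖ * (‖f‖ + ε)) ^ 2)
          (nhds 0) (nhds (A * (‖Pih‖ * (‖f‖ + 0)) ^ 2)) := by
        exact Continuous.tendsto (continuous_const.mul (((continuous_const.mul (continuous_const.add continuous_id)).pow 2))) 0
      have : A * (‖Pih‖ * (‖f‖ + 0)) ^ 2 = (‖Pih‖ ^ 2 * A) * ‖f‖ ^ 2 := by ring
      rw [this] at hcont
      exact hcont.mono_left nhdsWithin_le_nhds
    refine ge_of_tendsto ht ?_
    filter_upwards [self_mem_nhdsWithin] with ε (hε : 0 < ε) using key ε hε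
  refine ⟨?_, hupper⟩
  -- Lower bound
  by_cases hbot : Vh = ⊥
  · -- trivial case
    have hf0 : f = 0 := by
      rw [← hu₀fq]
      have : u₀f = 0 := by rw [hbot] at hu₀f; simpa using hu₀f
      simp [this]
    have h0 : (0:ℝ) ≤ splitNormSqX V₀ Vsub f := by
      apply Real.sInf_nonneg
      rintro s ⟨g, -, -, rfl⟩
      positivity
    rw [hf0] at h0 ⊢
    simpa using h0
  · -- main case
    obtain ⟨u₁, hu₁Vh, hu₁ne⟩ := Submodule.ne_bot_iff Vh |>.mp hbot
    have hP1 : 1 ≤ ‖Pih‖ := by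
      have h1 : ‖u₁‖ ≤ ‖Pih‖ * ‖u₁‖ := by
        conv_lhs => rw [← hPiproj _ hu₁Vh]
        exact Pih.le_opNorm u₁
      have h2 : 0 < ‖u₁‖ := norm_pos_iff.mpr hu₁ne
      nlinarith
    have hP0 : (0:ℝ) < ‖Pih‖ := lt_of_lt_of_le one_pos hP1
    have hα1 : α ≤ 1 := by
      have hex : ∃ i, Vsub i ≠ ⊥ := by
        by_contra h
        push_neg at h
        exact hbot (by rw [hVh]; simp [h])
      obtain ⟨i, hi⟩ := hex
      obtain ⟨x, hxVi, hxne⟩ := Submodule.ne_bot_iff _ |>.mp hi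
      have hxVh : x ∈ Vh := by rw [hVh]; exact le_iSup Vsub i hxVi
      have hle : splitNormSqV Vsub x ≤ ‖x‖ ^ 2 := by
        refine csInf_le (hbddV x) ⟨fun j => if j = i then x else 0, ?_, ?_, ?_⟩
        · intro j
          by_cases hj : j = i
          · simpa [hj] using hxVi
          · simp [hj]
        · simp
        · have he : ∀ j : Fin n, ‖if j = i then x else 0‖ ^ 2
              = if j = i then ‖x‖ ^ 2 else 0 := by
            intro j; split <;> simp
          rw [Finset.sum_congr rfl (fun j _ => he j)]
          simp
      have h1 := (hstable x hxVh).1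
      have h2 : 0 < ‖x‖ ^ 2 := by
        have := norm_pos_iff.mpr hxne
        positivity
      nlinarith
    have hbddc : BddAbove (Set.range fun i : Fin n => if i = 0 then ‖Pih‖ else κ i) :=
      Set.Finite.bddAbove (Set.finite_range _)
    have hcPn : ‖Pih‖ ≤ c := by simpa using le_ciSup hbddc (0 : Fin n)
    have hcκ : ∀ i : Fin n, i ≠ 0 → κ i ≤ c := by
      intro i hi
      simpa [hi] using le_ciSup hbddc i
    have hc1 : (1:ℝ) ≤ c := le_trans hP1 hcPn
    have hc0 : (0:ℝ) < c := lt_of_lt_of_le one_pos hc1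
    have hdef : splitNormSqX V₀ Vsub f = sInf SX := rfl
    rw [hdef]
    refine le_csInf hSXne ?_
    rintro s ⟨g, hg, hgsum, rfl⟩
    set Pn : ℝ := ‖Pih‖ with hPn
    -- key claim for every ε > 0
    have key : ∀ ε > (0:ℝ), ‖f‖ ^ 2 ≤ 2 * (Pn * (‖g 0‖ + ε)) ^ 2
        + (2 / α) * ∑ i ∈ Finset.univ.erase 0, (κ i * Pn * ‖g i‖ + ε) ^ 2 := by
      intro ε hε
      -- good representatives for i ≠ 0
      have hchoice : ∀ i : Fin n, ∃ v : V, i ≠ 0 →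
          v ∈ Vsub i ∧ V₀.mkQ v = g i ∧ ‖v‖ < κ i * Pn * ‖g i‖ + ε := by
        intro i
        by_cases hi : i = 0
        · exact ⟨0, fun h => absurd hi h⟩
        obtain ⟨ui, huiV, huiq⟩ := hg i
        have hκi := hκ i hi
        set δ : ℝ := ε / (2 * (κ i * Pn + 1)) with hδ
        have hδ0 : 0 < δ := by positivity
        obtain ⟨m, hmmk, hmn⟩ := Submodule.Quotient.norm_mk_lt (g i) hδ0
        have hmq : V₀.mkQ m = g i := hmmk
        have hv₀ : ui - m ∈ V₀ := by
          rw [← Submodule.Quotient.eq]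
          show V₀.mkQ ui = V₀.mkQ m
          rw [huiq, hmq]
        have huiVh : ui ∈ Vh := by rw [hVh]; exact le_iSup Vsub i huiV
        have heq : ui - Pih (ui - m) = Pih m := by
          rw [map_sub, hPiproj _ huiVh]
          abel
        have hmemh : Pih (ui - m) ∈ V₀ ⊓ Vh :=
          Submodule.mem_inf.mpr ⟨hPipres _ hv₀, hPirange _⟩
        have hbddh : BddBelow {r : ℝ | ∃ u₀ ∈ V₀ ⊓ Vh, r = ‖ui - u₀‖} := by
          refine ⟨0, ?_⟩
          rintro r ⟨u₀, -, rfl⟩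
          positivity
        have hsinfh : sInf {r : ℝ | ∃ u₀ ∈ V₀ ⊓ Vh, r = ‖ui - u₀‖} ≤ Pn * (‖g i‖ + δ) := by
          refine le_trans (csInf_le hbddh ⟨Pih (ui - m), hmemh, rfl⟩) ?_
          rw [heq]
          refine (Pih.le_opNorm m).trans ?_
          have := hmn
          nlinarith
        have hBi := hB i hi ui huiV
        have hsinfi : sInf {r : ℝ | ∃ u₀ ∈ V₀ ⊓ Vsub i, r = ‖ui - u₀‖}
            ≤ κ i * (Pn * (‖g i‖ + δ)) :=
          le_trans hBi (mul_le_mul_of_nonneg_left hsinfh hκi.le)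
        have hne_i : {r : ℝ | ∃ u₀ ∈ V₀ ⊓ Vsub i, r = ‖ui - u₀‖}.Nonempty :=
          ⟨‖ui - 0‖, 0, Submodule.mem_inf.mpr ⟨zero_mem _, zero_mem _⟩, rfl⟩
        obtain ⟨r, ⟨u₀, hu₀mem, rfl⟩, hrlt⟩ := Real.lt_sInf_add_pos hne_i (half_pos hε)
        refine ⟨ui - u₀, fun _ => ⟨?_, ?_, ?_⟩⟩
        · exact sub_mem huiV (Submodule.mem_inf.mp hu₀mem).2
        · have : V₀.mkQ u₀ = 0 := by
            rw [Submodule.mkQ_apply, Submodule.Quotient.mk_eq_zero]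
            exact (Submodule.mem_inf.mp hu₀mem).1
          rw [map_sub, this, sub_zero, huiq]
        · have h1 : ‖ui - u₀‖ < κ i * (Pn * (‖g i‖ + δ)) + ε / 2 := by linarith
          have h2 : κ i * Pn * δ < ε / 2 := by
            rw [hδ, ← mul_div_assoc, div_lt_div_iff₀ (by positivity) two_pos]
            nlinarith [mul_pos hκi hP0]
          nlinarith
      choose vv hvv using hchoice
      -- representative for g 0
      obtain ⟨m₀, hm₀mk, hm₀n⟩ := Submodule.Quotient.norm_mk_lt (g 0) hε
      have hm₀q : V₀.mkQ m₀ = g 0 := hm₀mk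
      obtain ⟨u00, hu00V, hu00q⟩ := hg 0
      set w : V := Pih m₀ with hw
      have hwq : V₀.mkQ w = g 0 := by
        have h0 : m₀ - u00 ∈ V₀ := by
          rw [← Submodule.Quotient.eq]
          show V₀.mkQ m₀ = V₀.mkQ u00
          rw [hm₀q, hu00q]
        have hu00Vh : u00 ∈ Vh := by rw [hVh]; exact le_iSup Vsub 0 hu00V
        have h1 : Pih m₀ - u00 ∈ V₀ := by
          have := hPipres _ h0
          rwa [map_sub, hPiproj _ hu00Vh] at this
        rw [← hu00q, ← sub_eq_zero, ← map_sub, Submodule.mkQ_apply,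
          Submodule.Quotient.mk_eq_zero]
        exact h1
      have hwn : ‖w‖ ≤ Pn * (‖g 0‖ + ε) := by
        refine (Pih.le_opNorm m₀).trans ?_
        nlinarith
      set S : V := ∑ i ∈ Finset.univ.erase 0, vv i with hS
      have hSVh : S ∈ Vh := by
        refine Submodule.sum_mem _ fun i hi => ?_
        have hi0 := (Finset.mem_erase.mp hi).1
        rw [hVh]
        exact le_iSup Vsub i ((hvv i hi0).1)
      have hSq : V₀.mkQ S = ∑ i ∈ Finset.univ.erase 0, g i := by
        rw [hS, map_sum]
        exact Finset.sum_congr rfl fun i hi => (hvv i (Finset.mem_erase.mp hi).1).2.1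
      have huq : V₀.mkQ (w + S) = f := by
        rw [map_add, hwq, hSq, ← hgsum]
        exact Finset.add_sum_erase _ g (Finset.mem_univ 0)
      have hfle : ‖f‖ ≤ ‖w‖ + ‖S‖ := by
        rw [← huq]
        refine le_trans ?_ (norm_add_le w S)
        exact Submodule.Quotient.norm_mk_le _ _
      have hS2 : α * ‖S‖ ^ 2 ≤ ∑ i ∈ Finset.univ.erase 0, ‖vv i‖ ^ 2 := by
        refine le_trans (hstable S hSVh).1 ?_
        refine csInf_le (hbddV S) ⟨fun i => if i = 0 then 0 else vv i, ?_, ?_, ?_⟩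
        · intro i
          by_cases hi : i = 0
          · simp [hi]
          · simpa [hi] using (hvv i hi).1
        · exact sum_ite_erase vv
        · have he : ∀ j : Fin n, ‖if j = 0 then (0:V) else vv j‖ ^ 2
              = if j = 0 then 0 else ‖vv j‖ ^ 2 := by
            intro j; split <;> simp
          rw [Finset.sum_congr rfl (fun j _ => he j), sum_ite_erase (fun j => ‖vv j‖ ^ 2)]
      have hterm : ∀ i ∈ Finset.univ.erase 0,
          ‖vv i‖ ^ 2 ≤ (κ i * Pn * ‖g i‖ + ε) ^ 2 := by
        intro i hi
        have hi0 := (Finset.mem_erase.mp hi).1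
        exact pow_le_pow_left₀ (norm_nonneg _) ((hvv i hi0).2.2).le 2
      have hS3 : ‖S‖ ^ 2 ≤ (∑ i ∈ Finset.univ.erase 0, (κ i * Pn * ‖g i‖ + ε) ^ 2) / α := by
        rw [le_div_iff₀ hα]
        calc ‖S‖ ^ 2 * α = α * ‖S‖ ^ 2 := by ring
          _ ≤ ∑ i ∈ Finset.univ.erase 0, ‖vv i‖ ^ 2 := hS2
          _ ≤ _ := Finset.sum_le_sum hterm
      have hw2 : ‖w‖ ^ 2 ≤ (Pn * (‖g 0‖ + ε)) ^ 2 :=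
        pow_le_pow_left₀ (norm_nonneg _) hwn 2
      have hf2 : ‖f‖ ^ 2 ≤ 2 * ‖w‖ ^ 2 + 2 * ‖S‖ ^ 2 := by
        nlinarith [norm_nonneg f, norm_nonneg w, norm_nonneg S, sq_nonneg (‖w‖ - ‖S‖)]
      have : (2:ℝ) * ‖S‖ ^ 2 ≤ (2 / α)
          * ∑ i ∈ Finset.univ.erase 0, (κ i * Pn * ‖g i‖ + ε) ^ 2 := by
        rw [div_mul_eq_mul_div]
        rw [le_div_iff₀ hα] at *
        nlinarith [hS3, hα]
      linarith
    -- pass to the limit ε → 0⁺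
    have hflim : ‖f‖ ^ 2 ≤ 2 * (Pn * ‖g 0‖) ^ 2
        + (2 / α) * ∑ i ∈ Finset.univ.erase 0, (κ i * Pn * ‖g i‖) ^ 2 := by
      have hcont : Filter.Tendsto (fun ε : ℝ => 2 * (Pn * (‖g 0‖ + ε)) ^ 2
          + (2 / α) * ∑ i ∈ Finset.univ.erase 0, (κ i * Pn * ‖g i‖ + ε) ^ 2)
          (nhds 0) (nhds (2 * (Pn * (‖g 0‖ + 0)) ^ 2
          + (2 / α) * ∑ i ∈ Finset.univ.erase 0, (κ i * Pn * ‖g i‖ + 0) ^ 2)) := by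
        refine Continuous.tendsto ?_ 0
        refine Continuous.add ?_ ?_
        · exact continuous_const.mul (((continuous_const.mul
            (continuous_const.add continuous_id)).pow 2))
        · exact continuous_const.mul (continuous_finset_sum _ fun i _ =>
            (continuous_const.add continuous_id).pow 2)
      simp only [add_zero] at hcont
      refine ge_of_tendsto (hcont.mono_left (nhdsWithin_le_nhds (s := Set.Ioi (0:ℝ)))) ?_
      filter_upwards [self_mem_nhdsWithin] with ε (hε : 0 < ε) using key ε hε
    -- conclude
    have h1 : α / (2 * c ^ 2 * Pn ^ 2) * (2 * (Pn * ‖g 0‖) ^ 2) ≤ ‖g 0‖ ^ 2 := by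
      rw [div_mul_eq_mul_div, div_le_iff₀ (by positivity)]
      nlinarith [sq_nonneg (Pn * ‖g 0‖), sq_nonneg ‖g 0‖,
        mul_nonneg (mul_nonneg (by nlinarith : (0:ℝ) ≤ c ^ 2 - α)
          (sq_nonneg Pn)) (sq_nonneg ‖g 0‖)]
    have h2 : ∀ i ∈ Finset.univ.erase 0,
        α / (2 * c ^ 2 * Pn ^ 2) * ((2 / α) * (κ i * Pn * ‖g i‖) ^ 2) ≤ ‖g i‖ ^ 2 := by
      intro i hi
      have hi0 := (Finset.mem_erase.mp hi).1
      have hκi := hκ i hi0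
      have hκc := hcκ i hi0
      have heq : α / (2 * c ^ 2 * Pn ^ 2) * ((2 / α) * (κ i * Pn * ‖g i‖) ^ 2)
          = (κ i * ‖g i‖) ^ 2 / c ^ 2 := by
        field_simp
      rw [heq, div_le_iff₀ (by positivity)]
      nlinarith [mul_nonneg (mul_nonneg (sub_nonneg.mpr hκc)
        (by positivity : (0:ℝ) ≤ c + κ i)) (sq_nonneg ‖g i‖)]
    calc α / (2 * c ^ 2 * Pn ^ 2) * ‖f‖ ^ 2
        ≤ α / (2 * c ^ 2 * Pn ^ 2) * (2 * (Pn * ‖g 0‖) ^ 2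
          + (2 / α) * ∑ i ∈ Finset.univ.erase 0, (κ i * Pn * ‖g i‖) ^ 2) :=
          mul_le_mul_of_nonneg_left hflim (by positivity)
      _ = α / (2 * c ^ 2 * Pn ^ 2) * (2 * (Pn * ‖g 0‖) ^ 2)
          + ∑ i ∈ Finset.univ.erase 0,
            α / (2 * c ^ 2 * Pn ^ 2) * ((2 / α) * (κ i * Pn * ‖g i‖) ^ 2) := by
          rw [mul_add, Finset.mul_sum, Finset.mul_sum]
      _ ≤ ‖g 0‖ ^ 2 + ∑ i ∈ Finset.univ.erase 0, ‖g i‖ ^ 2 :=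
          add_le_add h1 (Finset.sum_le_sum h2)
      _ = ∑ i, ‖g i‖ ^ 2 := Finset.add_sum_erase _ (fun i => ‖g i‖ ^ 2) (Finset.mem_univ (0 : Fin n))
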